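/- arXiv:1911.05917 — 5 statements merged into one kernel-verified Lean document; each statement's English description precedes it below -/
import Mathlib

section
/- Let n ≥ 2 and let f:(0,∞)^n → (0,∞)^n be given by f_j(x) = ∏_{i≠j} x_i. Then f maps the open unit cube (0,1)^n bijectively onto the set { y ∈ (0,1)^n : ∏_{k=1}^n y_k < y_i^{n-1} for all i = 1,…,n }. -/
open Finset

private lemma prod_erase_div' {n : ℕ} (x : Fin n → ℝ) (hx : ∀ i, x i ≠ 0) (j : Fin n) :
    ∏ i ∈ univ.erase j, x i = (∏ i, x i) / x j :=
  (eq_div_iff (hx j)).mpr (Finset.prod_erase_mul _ _ (mem_univ j))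

private lemma prod_f_eq {n : ℕ} (x : Fin n → ℝ) (hx : ∀ i, x i ≠ 0) :
    ∏ j, ∏ i ∈ univ.erase j, x i = (∏ i, x i) ^ (n - 1) := by
  rcases Nat.eq_zero_or_pos n with h | h
  · subst h; simp
  have hPne : (∏ i, x i) ≠ 0 := Finset.prod_ne_zero_iff.mpr fun i _ => hx i
  rw [Finset.prod_congr rfl (fun j _ => prod_erase_div' x hx j), Finset.prod_div_distrib,
    Finset.prod_const, Finset.card_univ, Fintype.card_fin, div_eq_iff hPne, ← pow_succ]
  congr 1
  omega

theorem product_map_bijOn_unit_cube (n : ℕ) (hn : 2 ≤ n) :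
    Set.BijOn (fun x : Fin n → ℝ => fun j : Fin n => ∏ i ∈ Finset.univ.erase j, x i)
      {x : Fin n → ℝ | ∀ i, x i ∈ Set.Ioo (0 : ℝ) 1}
      {y : Fin n → ℝ | (∀ i, y i ∈ Set.Ioo (0 : ℝ) 1) ∧ ∀ i, ∏ k, y k < y i ^ (n - 1)} := by
  have hn0 : n - 1 ≠ 0 := by omega
  refine ⟨?_, ?_, ?_⟩
  · intro x hx
    have hx0 : ∀ i, 0 < x i := fun i => (hx i).1
    have hx1 : ∀ i, x i < 1 := fun i => (hx i).2
    have hxne : ∀ i, x i ≠ 0 := fun i => (hx0 i).ne'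
    have hP : 0 < ∏ i, x i := Finset.prod_pos fun i _ => hx0 i
    have hlt1 : ∀ j : Fin n, ∏ i ∈ univ.erase j, x i < 1 := by
      intro j
      have hne : (univ.erase j).Nonempty := by
        rw [← Finset.card_pos, Finset.card_erase_of_mem (mem_univ j), Finset.card_univ,
          Fintype.card_fin]; omega
      calc ∏ i ∈ univ.erase j, x i < ∏ _i ∈ univ.erase j, (1:ℝ) :=
            Finset.prod_lt_prod_of_nonempty (fun i _ => hx0 i) (fun i _ => hx1 i) hne
        _ = 1 := by simp
    constructor
    · intro j
      exact ⟨Finset.prod_pos fun i _ => hx0 i, hlt1 j⟩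
    · intro i
      simp only
      rw [prod_f_eq x hxne, prod_erase_div' x hxne i]
      refine pow_lt_pow_left₀ ?_ hP.le hn0
      rw [lt_div_iff₀ (hx0 i)]
      nlinarith [hP, hx1 i, hx0 i]
  · intro x hx x' hx' hfe
    have hxne : ∀ i, x i ≠ 0 := fun i => ((hx i).1).ne'
    have hxne' : ∀ i, x' i ≠ 0 := fun i => ((hx' i).1).ne'
    have hP : 0 < ∏ i, x i := Finset.prod_pos fun i _ => (hx i).1
    have hP' : 0 < ∏ i, x' i := Finset.prod_pos fun i _ => (hx' i).1
    have hpow : (∏ i, x i) ^ (n-1) = (∏ i, x' i) ^ (n-1) := by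
      rw [← prod_f_eq x hxne, ← prod_f_eq x' hxne']
      exact Finset.prod_congr rfl fun j _ => congrFun hfe j
    have hPP : (∏ i, x i) = ∏ i, x' i := by
      have := pow_left_strictMonoOn₀ (M₀ := ℝ) (n := n-1) hn0
      exact this.injOn hP.le hP'.le hpow
    funext j
    have h1 : (∏ i, x i) / x j = (∏ i, x' i) / x' j := by
      rw [← prod_erase_div' x hxne j, ← prod_erase_div' x' hxne' j]
      exact congrFun hfe j
    rw [hPP, div_eq_mul_inv, div_eq_mul_inv] at h1
    exact inv_injective (mul_left_cancel₀ hP'.ne' h1)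
  · intro y hy
    obtain ⟨hy1, hy2⟩ := hy
    have hy0 : ∀ i, 0 < y i := fun i => (hy1 i).1
    have hyne : ∀ i, y i ≠ 0 := fun i => (hy0 i).ne'
    have hQ : 0 < ∏ k, y k := Finset.prod_pos fun i _ => hy0 i
    set P : ℝ := (∏ k, y k) ^ ((n - 1 : ℕ) : ℝ)⁻¹ with hPdef
    have hP0 : 0 < P := Real.rpow_pos_of_pos hQ _
    have hPQ : P ^ (n - 1) = ∏ k, y k := Real.rpow_inv_natCast_pow hQ.le hn0
    have hPlt : ∀ j, P < y j := by
      intro j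
      have : P ^ (n-1) < (y j) ^ (n-1) := by rw [hPQ]; exact hy2 j
      exact lt_of_pow_lt_pow_left₀ _ (hy0 j).le this
    refine ⟨fun j => P / y j, ?_, ?_⟩
    · intro j
      exact ⟨div_pos hP0 (hy0 j), (div_lt_one (hy0 j)).mpr (hPlt j)⟩
    · funext j
      simp only
      have hne : ∀ i, P / y i ≠ 0 := fun i => (div_pos hP0 (hy0 i)).ne'
      rw [prod_erase_div' _ hne j]
      rw [Finset.prod_div_distrib, Finset.prod_const, Finset.card_univ, Fintype.card_fin]
      have hn' : P ^ n = (∏ k, y k) * P := by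
        rw [← hPQ, ← pow_succ]
        congr 1
        omega
      rw [hn']
      field_simp
end

section
/- Let n ≥ 2 and consider the change of variables v_j = ∏_{i≠j} t_i on (0,∞)^n, with inverse t_i = (∏_{k=1}^n v_k)^{1/(n-1)} / v_i. The Jacobian determinant det(∂t_i/∂v_j) equals ((-1)^{n-1}/(n-1)) · (∏_{k=1}^n v_k)^{-(n-2)/(n-1)}, which also equals ((-1)^{n-1}/(n-1)) · (∏_{i=1}^n t_i)^{-(n-2)}. -/
open Finset

/-- The inverse map `t(v)` of the substitution `v_j = ∏_{i ≠ j} t_i`. -/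
noncomputable def invSubst (n : ℕ) (v : Fin n → ℝ) : Fin n → ℝ :=
  fun i => (v i)⁻¹ * (∏ k, v k) ^ (((n : ℝ) - 1)⁻¹)

theorem entry_eq (n : ℕ) (v : Fin n → ℝ) (hv : ∀ i, 0 < v i) (i j : Fin n) :
    fderiv ℝ (fun w : Fin n → ℝ => (w i)⁻¹ * (∏ k, w k) ^ (((n : ℝ) - 1)⁻¹)) v (Pi.single j 1)
      = (∏ k, v k) ^ (((n : ℝ) - 1)⁻¹) * (v i)⁻¹ * (v j)⁻¹
        * ((((n : ℝ) - 1)⁻¹) - if i = j then 1 else 0) := by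
  set c : ℝ := ((n : ℝ) - 1)⁻¹ with hc
  have hP : 0 < ∏ k, v k := Finset.prod_pos fun k _ => hv k
  have hproj : HasFDerivAt (𝕜 := ℝ) (fun w : Fin n → ℝ => w i)
      (ContinuousLinearMap.proj i) v := by exact hasFDerivAt_apply i v
  have hinv : HasFDerivAt (fun w : Fin n → ℝ => (w i)⁻¹)
      ((-(v i ^ 2)⁻¹) • ContinuousLinearMap.proj i) v :=
    (hasDerivAt_inv (hv i).ne').comp_hasFDerivAt v hproj
  have hprod : HasFDerivAt (fun w : Fin n → ℝ => ∏ k, w k)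
      (∑ k, (∏ l ∈ univ.erase k, v l) • ContinuousLinearMap.proj k) v :=
    hasFDerivAt_finset_prod (𝕜 := ℝ)
  have hrpow := hprod.rpow_const (p := c) (Or.inl hP.ne')
  have hmul : HasFDerivAt (fun w : Fin n → ℝ => (w i)⁻¹ * (∏ k, w k) ^ c) _ v := hinv.mul hrpow
  rw [hmul.fderiv]
  have herase : ∏ l ∈ univ.erase j, v l = (∏ k, v k) * (v j)⁻¹ := by
    field_simp [(hv j).ne']
    exact Finset.prod_erase_mul univ v (mem_univ j)
  have hPc : (∏ k, v k) ^ (c - 1) * (∏ k, v k) = (∏ k, v k) ^ c := by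
    rw [Real.rpow_sub hP, Real.rpow_one]
    field_simp
  simp only [ContinuousLinearMap.add_apply, ContinuousLinearMap.coe_smul', Pi.smul_apply,
    ContinuousLinearMap.sum_apply, ContinuousLinearMap.smul_apply,
    ContinuousLinearMap.proj_apply, smul_eq_mul, Pi.single_apply, mul_ite, mul_one, mul_zero,
    Finset.sum_ite_eq', mem_univ, if_true, herase]
  rw [← hPc]
  rcases eq_or_ne i j with h | h <;> simp [h] <;> field_simp [(hv i).ne', (hv j).ne'] <;> ring

theorem detC (n : ℕ) (c : ℝ) :
    (Matrix.of fun i j : Fin n => c - if i = j then (1:ℝ) else 0).det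
      = (-1) ^ n * (1 - n * c) := by
  have h : (Matrix.of fun i j : Fin n => c - if i = j then (1:ℝ) else 0)
      = -(1 + Matrix.replicateCol Unit (fun _ => (-c)) * Matrix.replicateRow Unit (fun _ => (1:ℝ))) := by
    ext i j
    simp [Matrix.mul_apply, Matrix.one_apply]
    ring
  rw [h, Matrix.det_neg, Matrix.det_one_add_replicateCol_mul_replicateRow]
  simp [dotProduct, Finset.sum_const]
  ring

theorem jacobian_of_inverse_substitution (n : ℕ) (hn : 2 ≤ n) (v : Fin n → ℝ)
    (hv : ∀ i, 0 < v i) :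
    (Matrix.of fun i j : Fin n =>
        fderiv ℝ (fun w : Fin n → ℝ => invSubst n w i) v (Pi.single j 1)).det
      = (-1) ^ (n - 1) / ((n : ℝ) - 1) * (∏ k, v k) ^ (-((n : ℝ) - 2) / ((n : ℝ) - 1)) ∧
    (Matrix.of fun i j : Fin n =>
        fderiv ℝ (fun w : Fin n → ℝ => invSubst n w i) v (Pi.single j 1)).det
      = (-1) ^ (n - 1) / ((n : ℝ) - 1) * (∏ i, invSubst n v i) ^ (-((n : ℝ) - 2)) := by
  have hn1 : (0:ℝ) < (n:ℝ) - 1 := by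
    have : (2:ℝ) ≤ (n:ℝ) := by exact_mod_cast hn
    linarith
  set c : ℝ := ((n : ℝ) - 1)⁻¹ with hc
  set P : ℝ := ∏ k, v k with hPdef
  have hP : 0 < P := Finset.prod_pos fun k _ => hv k
  have hM : (Matrix.of fun i j : Fin n =>
        fderiv ℝ (fun w : Fin n → ℝ => invSubst n w i) v (Pi.single j 1))
      = (P ^ c) • (Matrix.diagonal (fun i => (v i)⁻¹) *
          (Matrix.of fun i j : Fin n => c - if i = j then (1:ℝ) else 0) *
          Matrix.diagonal (fun i => (v i)⁻¹)) := by
    ext i j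
    simp only [Matrix.of_apply, invSubst]
    rw [entry_eq n v hv i j]
    rw [Matrix.smul_apply, Matrix.mul_diagonal, Matrix.diagonal_mul, Matrix.of_apply,
      smul_eq_mul]
    ring
  have hdet : (Matrix.of fun i j : Fin n =>
        fderiv ℝ (fun w : Fin n → ℝ => invSubst n w i) v (Pi.single j 1)).det
      = (-1) ^ (n - 1) / ((n : ℝ) - 1) * P ^ (-((n : ℝ) - 2) / ((n : ℝ) - 1)) := by
    rw [hM, Matrix.det_smul, Matrix.det_mul, Matrix.det_mul, Matrix.det_diagonal, detC n c,
      Fintype.card_fin]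
    have h1 : (P ^ c) ^ n = P ^ (c * n) := by
      rw [← Real.rpow_natCast (P ^ c) n, ← Real.rpow_mul hP.le]
    have h2 : ∏ i, (v i)⁻¹ = P ^ (-1 : ℝ) := by
      rw [Real.rpow_neg_one, ← Finset.prod_inv_distrib]
    have h3 : (1:ℝ) - n * c = -c := by
      rw [hc]; field_simp; ring
    have h4 : (-1:ℝ) ^ n = (-1) ^ (n - 1) * (-1) := by
      rw [← pow_succ, Nat.sub_add_cancel (by omega)]
    have h5 : P ^ (c * n) * P ^ (-1:ℝ) * P ^ (-1:ℝ) = P ^ (-((n : ℝ) - 2) / ((n : ℝ) - 1)) := by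
      rw [← Real.rpow_add hP, ← Real.rpow_add hP]
      congr 1
      rw [hc]; field_simp; ring
    rw [h1, h2, h3, h4]
    calc P ^ (c * ↑n) * (P ^ (-1:ℝ) * ((-1:ℝ) ^ (n-1) * -1 * -c) * P ^ (-1:ℝ))
        = (-1:ℝ) ^ (n-1) * c * (P ^ (c * ↑n) * P ^ (-1:ℝ) * P ^ (-1:ℝ)) := by ring
      _ = (-1) ^ (n - 1) / ((n : ℝ) - 1) * P ^ (-((n : ℝ) - 2) / ((n : ℝ) - 1)) := by
          rw [h5, hc]; ring
  refine ⟨hdet, hdet.trans ?_⟩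
  congr 1
  have hprodInv : ∏ i, invSubst n v i = P ^ c := by
    simp only [invSubst]
    rw [Finset.prod_mul_distrib, Finset.prod_const, ← hPdef]
    simp only [card_univ, Fintype.card_fin, ← hc]
    rw [← Real.rpow_natCast (P ^ c) n, ← Real.rpow_mul hP.le]
    have h2 : ∏ i, (v i)⁻¹ = P ^ (-1 : ℝ) := by
      rw [Real.rpow_neg_one, ← Finset.prod_inv_distrib]
    rw [h2, ← Real.rpow_add hP]
    congr 1
    rw [hc]; field_simp; ring
  rw [hprodInv, ← Real.rpow_mul hP.le]
  congr 1
  rw [hc]; field_simp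
end

section
/- Let n ≥ 2, α > 0, and let l = (l_1,…,l_n) be real numbers with l_i < n−1 for all i, and set L = ∑ l_i. Then ∫_{[0,1]^n} (1 − α ∑_{i=1}^n ∏_{j≠i} t_j)^{N−n} ∏_{i=1}^n t_i^{n−2−l_i} dt = (α(N−n))^{−(n − L/(n−1))} · (n−1)^{−1} · ∫_D (1 − (∑ s_i)/(N−n))^{N−n} ∏_{i=1}^n s_i^{l_i − L/(n−1)} ds, where D = { s ∈ (0, α(N−n))^n : ∏_{j=1}^n s_j^{1/(n−1)} ≤ (α(N−n))^{1/(n−1)} s_i for all i }. -/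
open Finset MeasureTheory

noncomputable def Tderiv (c : ℝ) (n : ℕ) (t : Fin n → ℝ) : (Fin n → ℝ) →L[ℝ] (Fin n → ℝ) :=
  ContinuousLinearMap.pi fun i =>
    c • ∑ k ∈ Finset.univ.erase i, (∏ j ∈ (Finset.univ.erase i).erase k, t j) •
      (ContinuousLinearMap.proj k : (Fin n → ℝ) →L[ℝ] ℝ)

theorem Tmap_hasFDerivAt (c : ℝ) (n : ℕ) (t : Fin n → ℝ) :
    HasFDerivAt (fun t : Fin n → ℝ => fun i => c * ∏ j ∈ Finset.univ.erase i, t j)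
      (Tderiv c n t) t := by
  rw [hasFDerivAt_pi']
  intro i
  have h : HasFDerivAt (fun t : Fin n → ℝ => ∏ j ∈ Finset.univ.erase i, t j)
      (∑ k ∈ Finset.univ.erase i, (∏ j ∈ (Finset.univ.erase i).erase k, t j) •
        (ContinuousLinearMap.proj k : (Fin n → ℝ) →L[ℝ] ℝ)) t := by
    exact HasFDerivAt.finset_prod (fun k _ => hasFDerivAt_apply (𝕜 := ℝ) k t)
  exact h.const_mul c

theorem Tderiv_toMatrix (c : ℝ) (n : ℕ) (t : Fin n → ℝ) (ht : ∀ i, t i ≠ 0) :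
    LinearMap.toMatrix' ((Tderiv c n t) : (Fin n → ℝ) →ₗ[ℝ] (Fin n → ℝ)) =
      (c * ∏ i, t i) • (Matrix.diagonal (fun i => (t i)⁻¹) *
        (Matrix.of (fun _ _ => (1:ℝ)) - 1) * Matrix.diagonal (fun i => (t i)⁻¹)) := by
  ext i k
  rw [LinearMap.toMatrix'_apply, ContinuousLinearMap.coe_coe]
  have hL : (Tderiv c n t) (fun j' => if j' = k then 1 else 0) i
      = if k ∈ Finset.univ.erase i then c * ∏ j ∈ (Finset.univ.erase i).erase k, t j else 0 := by
    simp only [Tderiv, ContinuousLinearMap.pi_apply, ContinuousLinearMap.smul_apply,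
      ContinuousLinearMap.coe_sum', Finset.sum_apply, ContinuousLinearMap.smul_apply,
      ContinuousLinearMap.proj_apply, Pi.smul_apply, smul_eq_mul, mul_ite, mul_one, mul_zero]
    rw [Finset.sum_ite_eq' (Finset.univ.erase i) k]
    split_ifs <;> simp
  have hps : (Pi.single k (1:ℝ) : Fin n → ℝ) = fun j' => if j' = k then 1 else 0 := by
    ext j'; simp [Pi.single_apply]
  rw [hps, hL]
  have hR : (((c * ∏ m, t m) • (Matrix.diagonal (fun i => (t i)⁻¹) *
        (Matrix.of (fun _ _ => (1:ℝ)) - 1) * Matrix.diagonal (fun i => (t i)⁻¹)) :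
        Matrix (Fin n) (Fin n) ℝ)) i k
      = (c * ∏ m, t m) * ((t i)⁻¹ * (if i = k then 0 else 1) * (t k)⁻¹) := by
    simp only [Matrix.smul_apply, Matrix.mul_diagonal, Matrix.sub_apply, Matrix.diagonal_mul,
      Matrix.of_apply, Matrix.one_apply, smul_eq_mul]
    split_ifs <;> ring
  rw [hR]
  by_cases hk : k = i
  · subst hk
    simp
  · rw [if_pos (Finset.mem_erase.2 ⟨hk, Finset.mem_univ k⟩), if_neg (fun h => hk h.symm)]
    have h1 : (∏ m, t m) = t i * ∏ j ∈ Finset.univ.erase i, t j :=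
      (Finset.mul_prod_erase _ _ (Finset.mem_univ i)).symm
    have h2 : ∏ j ∈ Finset.univ.erase i, t j
        = t k * ∏ j ∈ (Finset.univ.erase i).erase k, t j :=
      (Finset.mul_prod_erase _ _ (Finset.mem_erase.2 ⟨hk, Finset.mem_univ k⟩)).symm
    rw [h1, h2]
    field_simp [ht i, ht k]

theorem det_ones_sub_one (n : ℕ) :
    (Matrix.of (fun _ _ => (1:ℝ)) - 1 : Matrix (Fin n) (Fin n) ℝ).det
      = (-1)^n * (1 - (n:ℝ)) := by
  have h : (Matrix.of (fun _ _ => (1:ℝ)) - 1 : Matrix (Fin n) (Fin n) ℝ)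
      = -(1 + Matrix.replicateCol Unit (fun _ => (-1:ℝ)) * Matrix.replicateRow Unit (fun _ => (1:ℝ))) := by
    ext i k
    simp only [Matrix.sub_apply, Matrix.of_apply, Matrix.neg_apply, Matrix.add_apply,
      Matrix.one_apply, Matrix.mul_apply, Matrix.replicateCol_apply, Matrix.replicateRow_apply]
    simp
    split_ifs <;> ring
  rw [h, Matrix.det_neg, Matrix.det_one_add_replicateCol_mul_replicateRow]
  simp [dotProduct, sub_eq_add_neg]

theorem Tderiv_det (c : ℝ) (n : ℕ) (hn : 2 ≤ n) (t : Fin n → ℝ) (ht : ∀ i, t i ≠ 0) :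
    (Tderiv c n t).det = (-1)^n * (1 - (n:ℝ)) * c^n * (∏ i, t i)^(n-2) := by
  have hd : (Tderiv c n t).det
      = (LinearMap.toMatrix' ((Tderiv c n t) : (Fin n → ℝ) →ₗ[ℝ] (Fin n → ℝ))).det :=
    (LinearMap.det_toMatrix' _).symm
  rw [hd, Tderiv_toMatrix c n t ht, Matrix.det_smul, Matrix.det_mul, Matrix.det_mul,
    Matrix.det_diagonal, det_ones_sub_one]

  have hP : (∏ i, t i) ≠ 0 := Finset.prod_ne_zero_iff.2 fun i _ => ht i
  have hinv : (∏ i, (t i)⁻¹) = (∏ i, t i)⁻¹ := by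
    rw [← Finset.prod_inv_distrib]
  rw [hinv]
  have hpow : (∏ i, t i) ^ n = (∏ i, t i)^(n-2) * (∏ i, t i) * (∏ i, t i) := by
    rw [← pow_succ, ← pow_succ]
    congr 1
    omega
  rw [Fintype.card_fin, mul_pow, hpow]
  field_simp

theorem graph_null {n : ℕ} (j0 : Fin n) (F : ({k : Fin n // k ≠ j0} → ℝ) → ℝ)
    (hF : Measurable F) :
    volume {s : Fin n → ℝ | s j0 = F (fun k => s k.1)} = 0 := by
  classical
  set e := MeasurableEquiv.piEquivPiSubtypeProd (fun _ : Fin n => ℝ) (fun k => k ≠ j0) with he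
  set B : Set (({k : Fin n // k ≠ j0} → ℝ) × ({k : Fin n // ¬ k ≠ j0} → ℝ)) :=
    {p | p.2 ⟨j0, by simp⟩ = F p.1} with hB
  have hBm : MeasurableSet B := by
    apply measurableSet_eq_fun
    · exact (measurable_pi_apply _).comp measurable_snd
    · exact hF.comp measurable_fst
  have hpre : {s : Fin n → ℝ | s j0 = F (fun k => s k.1)} = e ⁻¹' B := by
    ext s
    rfl
  rw [hpre]
  rw [(volume_preserving_piEquivPiSubtypeProd (fun _ : Fin n => ℝ)
    (fun k => k ≠ j0)).measure_preimage hBm.nullMeasurableSet]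
  rw [Measure.volume_eq_prod, Measure.measure_prod_null hBm]
  filter_upwards with y
  have : (Prod.mk y ⁻¹' B) = {x : ({k : Fin n // ¬ k ≠ j0} → ℝ) | x ⟨j0, by simp⟩ = F y} := rfl
  rw [this, volume_pi]
  exact Measure.pi_hyperplane _ _ _

theorem rpow_nk (n : ℕ) (hn : 2 ≤ n) (x : ℝ) (hx : 0 < x) :
    (x ^ (((n:ℝ)-1)⁻¹)) ^ (n - 1) = x := by
  have hcast : ((n - 1 : ℕ) : ℝ) = (n:ℝ) - 1 := by
    rw [Nat.cast_sub (by omega), Nat.cast_one]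
  have hne : (n:ℝ) - 1 ≠ 0 := by
    have : (2:ℝ) ≤ (n:ℝ) := by exact_mod_cast hn
    nlinarith
  rw [← Real.rpow_natCast (x ^ (((n:ℝ)-1)⁻¹)) (n-1), ← Real.rpow_mul hx.le, hcast,
    inv_mul_cancel₀ hne, Real.rpow_one]

theorem rpow_kn (n : ℕ) (hn : 2 ≤ n) (x : ℝ) (hx : 0 < x) :
    ((x : ℝ) ^ (n - 1)) ^ (((n:ℝ)-1)⁻¹) = x := by
  have hcast : ((n - 1 : ℕ) : ℝ) = (n:ℝ) - 1 := by
    rw [Nat.cast_sub (by omega), Nat.cast_one]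
  have hne : (n:ℝ) - 1 ≠ 0 := by
    have : (2:ℝ) ≤ (n:ℝ) := by exact_mod_cast hn
    nlinarith
  rw [← Real.rpow_natCast x (n-1), ← Real.rpow_mul hx.le, hcast, mul_inv_cancel₀ hne,
    Real.rpow_one]

theorem prod_erase_eq' (n : ℕ) (t : Fin n → ℝ) (ht : ∀ i, t i ≠ 0) (i : Fin n) :
    ∏ j ∈ Finset.univ.erase i, t j = (∏ j, t j) * (t i)⁻¹ := by
  have h := Finset.mul_prod_erase Finset.univ t (Finset.mem_univ i)
  field_simp [ht i]
  linarith [h]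

theorem prod_prod_erase (n : ℕ) (hn : 1 ≤ n) (t : Fin n → ℝ) (ht : ∀ i, t i ≠ 0) :
    ∏ i, ∏ j ∈ Finset.univ.erase i, t j = (∏ j, t j) ^ (n - 1) := by
  have hP : (∏ j, t j) ≠ 0 := Finset.prod_ne_zero_iff.2 fun i _ => ht i
  calc ∏ i, ∏ j ∈ Finset.univ.erase i, t j
      = ∏ i, ((∏ j, t j) * (t i)⁻¹) := by
        exact Finset.prod_congr rfl fun i _ => prod_erase_eq' n t ht i
    _ = (∏ j, t j) ^ n * (∏ i, (t i)⁻¹) := by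
        rw [Finset.prod_mul_distrib, Finset.prod_const, Finset.card_univ, Fintype.card_fin]
    _ = (∏ j, t j) ^ n * (∏ j, t j)⁻¹ := by rw [Finset.prod_inv_distrib]
    _ = (∏ j, t j) ^ (n - 1) := by
        have h1 : (∏ j, t j) ^ n = (∏ j, t j)^(n-1) * (∏ j, t j) := by
          rw [← pow_succ]; congr 1; omega
        rw [h1, mul_assoc, mul_inv_cancel₀ hP, mul_one]

theorem Tmap_injOn (n : ℕ) (hn : 2 ≤ n) (c : ℝ) (hc : 0 < c) :
    Set.InjOn (fun (t : Fin n → ℝ) (i : Fin n) => c * ∏ j ∈ Finset.univ.erase i, t j)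
      (Set.univ.pi fun _ => Set.Ioo (0:ℝ) 1) := by
  intro t ht t' ht' h
  have hti : ∀ i, 0 < t i := fun i => (ht i (Set.mem_univ i)).1
  have hti' : ∀ i, 0 < t' i := fun i => (ht' i (Set.mem_univ i)).1
  have htne : ∀ i, t i ≠ 0 := fun i => (hti i).ne'
  have htne' : ∀ i, t' i ≠ 0 := fun i => (hti' i).ne'
  have hv : ∀ i, ∏ j ∈ Finset.univ.erase i, t j = ∏ j ∈ Finset.univ.erase i, t' j := by
    intro i
    have := congrFun h i
    exact mul_left_cancel₀ hc.ne' this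
  have hPpow : (∏ j, t j) ^ (n-1) = (∏ j, t' j) ^ (n-1) := by
    rw [← prod_prod_erase n (by omega) t htne, ← prod_prod_erase n (by omega) t' htne']
    exact Finset.prod_congr rfl fun i _ => hv i
  have hP : (∏ j, t j) = (∏ j, t' j) := by
    have h0 : (0:ℝ) ≤ ∏ j, t j := Finset.prod_nonneg fun i _ => (hti i).le
    have h0' : (0:ℝ) ≤ ∏ j, t' j := Finset.prod_nonneg fun i _ => (hti' i).le
    exact (pow_left_strictMonoOn₀ (n := n - 1) (by omega)).injOn h0 h0' hPpow
  funext i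
  have h1 : t i * ∏ j ∈ Finset.univ.erase i, t j = t' i * ∏ j ∈ Finset.univ.erase i, t j := by
    rw [Finset.mul_prod_erase Finset.univ t (Finset.mem_univ i), hP, hv i,
      Finset.mul_prod_erase Finset.univ t' (Finset.mem_univ i)]
  have hvne : ∏ j ∈ Finset.univ.erase i, t j ≠ 0 :=
    Finset.prod_ne_zero_iff.2 fun j _ => htne j
  exact mul_right_cancel₀ hvne h1

theorem Tmap_image (n : ℕ) (hn : 2 ≤ n) (c : ℝ) (hc : 0 < c) :
    (fun (t : Fin n → ℝ) (i : Fin n) => c * ∏ j ∈ Finset.univ.erase i, t j) ''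
      (Set.univ.pi fun _ => Set.Ioo (0:ℝ) 1)
    = {s : Fin n → ℝ | (∀ i, 0 < s i ∧ s i < c) ∧
        ∀ i, ∏ j, (s j) ^ (((n:ℝ)-1)⁻¹) < c ^ (((n:ℝ)-1)⁻¹) * s i} := by
  have hne : (n:ℝ) - 1 ≠ 0 := by
    have : (2:ℝ) ≤ (n:ℝ) := by exact_mod_cast hn
    nlinarith
  set β := ((n:ℝ)-1)⁻¹ with hβdef
  have hβ : 0 < β := by
    apply inv_pos.2
    have : (2:ℝ) ≤ (n:ℝ) := by exact_mod_cast hn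
    nlinarith
  ext s
  constructor
  · rintro ⟨t, ht, rfl⟩
    have hti : ∀ i, 0 < t i := fun i => (ht i (Set.mem_univ i)).1
    have hti1 : ∀ i, t i < 1 := fun i => (ht i (Set.mem_univ i)).2
    have htne : ∀ i, t i ≠ 0 := fun i => (hti i).ne'
    have hv : ∀ i, 0 < ∏ j ∈ Finset.univ.erase i, t j :=
      fun i => Finset.prod_pos fun j _ => hti j
    have hP : 0 < ∏ j, t j := Finset.prod_pos fun j _ => hti j
    have hv1 : ∀ i, ∏ j ∈ Finset.univ.erase i, t j < 1 := by
      intro i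
      haveI : Nontrivial (Fin n) := Fin.nontrivial_iff_two_le.2 hn
      obtain ⟨k, hk⟩ := exists_ne i
      have hkmem : k ∈ Finset.univ.erase i := Finset.mem_erase.2 ⟨hk, Finset.mem_univ k⟩
      rw [← Finset.mul_prod_erase _ t hkmem]
      have hrest : ∏ j ∈ (Finset.univ.erase i).erase k, t j ≤ 1 :=
        Finset.prod_le_one (fun j _ => (hti j).le) (fun j _ => (hti1 j).le)
      calc t k * ∏ j ∈ (Finset.univ.erase i).erase k, t j ≤ t k * 1 :=
            mul_le_mul_of_nonneg_left hrest (hti k).le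
        _ < 1 := by rw [mul_one]; exact hti1 k
    constructor
    · intro i
      constructor
      · exact mul_pos hc (hv i)
      · have := mul_lt_mul_of_pos_left (hv1 i) hc
        simpa using this
    · intro i
      have hprod : ∏ j, (c * ∏ k ∈ Finset.univ.erase j, t k) = c ^ n * (∏ j, t j)^(n-1) := by
        rw [Finset.prod_mul_distrib, Finset.prod_const, Finset.card_univ, Fintype.card_fin,
          prod_prod_erase n (by omega) t htne]
      have hrw : ∏ j, (c * ∏ k ∈ Finset.univ.erase j, t k) ^ β
          = (c ^ n * (∏ j, t j)^(n-1)) ^ β := by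
        rw [← hprod]
        exact Real.finset_prod_rpow _ _ (fun j _ => (mul_pos hc (hv j)).le) β
      rw [hrw]
      have hc1 : (c ^ n * (∏ j, t j)^(n-1)) ^ β = c * c ^ β * ∏ j, t j := by
        rw [Real.mul_rpow (pow_nonneg hc.le n) (pow_nonneg hP.le (n-1))]
        have e1 : ((∏ j, t j)^(n-1) : ℝ) ^ β = ∏ j, t j := rpow_kn n hn _ hP
        have e2 : (c ^ n : ℝ) ^ β = c * c ^ β := by
          have hb1 : (n:ℝ) * β = 1 + β := by
            rw [hβdef]
            field_simp
            ring
          rw [← Real.rpow_natCast c n, ← Real.rpow_mul hc.le, hb1, Real.rpow_add hc,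
            Real.rpow_one]
        rw [e1, e2]
      rw [hc1]
      have hPv : (∏ j, t j) < ∏ k ∈ Finset.univ.erase i, t k := by
        have := Finset.mul_prod_erase Finset.univ t (Finset.mem_univ i)
        rw [← this]
        nlinarith [hti1 i, hv i, hti i]
      calc c * c ^ β * ∏ j, t j < c * c ^ β * ∏ k ∈ Finset.univ.erase i, t k := by
            apply mul_lt_mul_of_pos_left hPv
            positivity
        _ = c ^ β * (c * ∏ k ∈ Finset.univ.erase i, t k) := by ring
  · rintro ⟨h1, h2⟩
    have hs : ∀ i, 0 < s i := fun i => (h1 i).1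
    set Q := ∏ k, (s k) ^ β with hQdef
    have hQ : 0 < Q := Finset.prod_pos fun k _ => Real.rpow_pos_of_pos (hs k) β
    have hcb : 0 < c ^ β := Real.rpow_pos_of_pos hc β
    refine ⟨fun j => Q / (c ^ β * s j), ?_, ?_⟩
    · intro j _
      constructor
      · exact div_pos hQ (mul_pos hcb (hs j))
      · rw [div_lt_one (mul_pos hcb (hs j))]
        exact h2 j
    · funext i
      have hcard : (Finset.univ.erase i).card = n - 1 := by
        rw [Finset.card_erase_of_mem (Finset.mem_univ i), Finset.card_univ, Fintype.card_fin]
      have hQP : Q ^ (n - 1) = ∏ k, s k := by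
        have : Q = (∏ k, s k) ^ β := Real.finset_prod_rpow _ _ (fun k _ => (hs k).le) β
        rw [this, rpow_nk n hn _ (Finset.prod_pos fun k _ => hs k)]
      have hcb1 : (c ^ β) ^ (n - 1) = c := rpow_nk n hn c hc
      have hsprod : ∏ k ∈ Finset.univ.erase i, s k = (∏ k, s k) * (s i)⁻¹ :=
        prod_erase_eq' n s (fun k => (hs k).ne') i
      have hQconst : ∏ j ∈ Finset.univ.erase i, (Q / (c ^ β * s j))
          = Q ^ (n-1) / ((c ^ β)^(n-1) * ∏ k ∈ Finset.univ.erase i, s k) := by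
        rw [Finset.prod_div_distrib, Finset.prod_const, hcard, Finset.prod_mul_distrib,
          Finset.prod_const, hcard]
      show c * ∏ j ∈ Finset.univ.erase i, (Q / (c ^ β * s j)) = s i
      rw [hQconst, hQP, hcb1, hsprod]
      have hPs : 0 < ∏ k, s k := Finset.prod_pos fun k _ => hs k
      field_simp

theorem Ai_null (n : ℕ) (hn : 2 ≤ n) (c : ℝ) (hc : 0 < c) (i : Fin n) :
    volume {s : Fin n → ℝ | (∀ k, 0 < s k) ∧
      ∏ j, (s j) ^ (((n:ℝ)-1)⁻¹) = c ^ (((n:ℝ)-1)⁻¹) * s i} = 0 := by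
  classical
  set β := ((n:ℝ)-1)⁻¹ with hβdef
  haveI : Nontrivial (Fin n) := Fin.nontrivial_iff_two_le.2 hn
  obtain ⟨j0, hj0⟩ := exists_ne i
  have hij0 : i ≠ j0 := fun h => hj0 h.symm
  set F : ({k : Fin n // k ≠ j0} → ℝ) → ℝ :=
    fun y => ((c ^ β * y ⟨i, hij0⟩) / ∏ k, (y k) ^ β) ^ (n - 1) with hF
  have hβ0 : (0:ℝ) ≤ β := by
    rw [hβdef]
    have h2 : (2:ℝ) ≤ (n:ℝ) := by exact_mod_cast hn
    exact inv_nonneg.2 (by linarith)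
  have hFm : Measurable F := by
    apply Measurable.pow_const
    apply Measurable.div
    · exact (measurable_pi_apply _).const_mul _
    · exact Finset.measurable_prod _ fun k _ =>
        (Real.continuous_rpow_const hβ0).measurable.comp (measurable_pi_apply k)
  refine measure_mono_null ?_ (graph_null j0 F hFm)
  intro s hs
  obtain ⟨hpos, heq⟩ := hs
  have hsub : ∏ k : {k : Fin n // k ≠ j0}, (s k.1) ^ β
      = ∏ k ∈ Finset.univ.erase j0, (s k) ^ β := by
    rw [Finset.prod_subtype (p := fun k => k ≠ j0) (Finset.univ.erase j0) (fun x => by simp)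
      (fun k => (s k) ^ β)]
  have hsplit : ∏ j, (s j) ^ β
      = (s j0) ^ β * ∏ k ∈ Finset.univ.erase j0, (s k) ^ β :=
    (Finset.mul_prod_erase Finset.univ (fun j => (s j) ^ β) (Finset.mem_univ j0)).symm
  have hrpos : 0 < ∏ k ∈ Finset.univ.erase j0, (s k) ^ β :=
    Finset.prod_pos fun k _ => Real.rpow_pos_of_pos (hpos k) β
  have hkey : (s j0) ^ β = (c ^ β * s i) / ∏ k ∈ Finset.univ.erase j0, (s k) ^ β := by
    rw [eq_div_iff hrpos.ne', ← hsplit, heq]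
  show s j0 = F (fun k => s k.1)
  rw [hF]
  simp only [hsub]
  rw [← hkey, rpow_nk n hn _ (hpos j0)]

theorem substitution_identity (n N : ℕ) (hn : 2 ≤ n) (hN : n < N) (α : ℝ) (hα : 0 < α)
    (l : Fin n → ℝ) (hl : ∀ i, l i < (n : ℝ) - 1) (L : ℝ) (hL : L = ∑ i, l i) :
    (∫ t in Set.univ.pi fun _ : Fin n => Set.Ioo (0 : ℝ) 1,
        (1 - α * ∑ i, ∏ j ∈ Finset.univ.erase i, t j) ^ (N - n) *
          ∏ i, (t i) ^ ((n : ℝ) - 2 - l i))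
      = (α * ((N : ℝ) - n)) ^ (-((n : ℝ) - L / ((n : ℝ) - 1))) * ((n : ℝ) - 1)⁻¹ *
        ∫ s in {s : Fin n → ℝ |
            (∀ i, s i ∈ Set.Ioo (0 : ℝ) (α * ((N : ℝ) - n))) ∧
            ∀ i, ∏ j, (s j) ^ (((n : ℝ) - 1)⁻¹)
              ≤ (α * ((N : ℝ) - n)) ^ (((n : ℝ) - 1)⁻¹) * s i},
          (1 - (∑ i, s i) / ((N : ℝ) - n)) ^ (N - n) *
            ∏ i, (s i) ^ (l i - L / ((n : ℝ) - 1)) := by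
  classical
  have hNn : (0:ℝ) < (N:ℝ) - n := by
    have : (n:ℝ) < N := by exact_mod_cast hN
    linarith
  set c : ℝ := α * ((N:ℝ) - n) with hcdef
  have hc : 0 < c := mul_pos hα hNn
  have hn1 : (0:ℝ) < (n:ℝ) - 1 := by
    have : (2:ℝ) ≤ (n:ℝ) := by exact_mod_cast hn
    linarith
  have hne : (n:ℝ) - 1 ≠ 0 := hn1.ne'
  set β : ℝ := ((n:ℝ)-1)⁻¹ with hβdef
  set γ : ℝ := L / ((n:ℝ)-1) with hγdef
  set g : (Fin n → ℝ) → ℝ :=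
    fun s => (1 - (∑ i, s i)/((N:ℝ)-n))^(N-n) * ∏ i, (s i)^(l i - γ) with hg
  set U := Set.univ.pi fun _ : Fin n => Set.Ioo (0:ℝ) 1 with hUdef
  have hUm : MeasurableSet U := MeasurableSet.univ_pi fun _ => measurableSet_Ioo
  -- replace closed domain by open image domain
  have hae : ({s : Fin n → ℝ | (∀ i, s i ∈ Set.Ioo (0:ℝ) c) ∧
        ∀ i, ∏ j, (s j) ^ β ≤ c ^ β * s i} : Set (Fin n → ℝ))
      =ᵐ[volume] {s : Fin n → ℝ | (∀ i, 0 < s i ∧ s i < c) ∧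
        ∀ i, ∏ j, (s j) ^ β < c ^ β * s i} := by
    rw [ae_eq_set]
    constructor
    · refine measure_mono_null ?_
        (measure_iUnion_null (s := fun i : Fin n => {s : Fin n → ℝ | (∀ k, 0 < s k) ∧
          ∏ j, (s j) ^ β = c ^ β * s i}) fun i => Ai_null n hn c hc i)
      rintro s ⟨⟨hs1, hs2⟩, hs3⟩
      rw [Set.mem_setOf_eq] at hs3
      push_neg at hs3
      obtain ⟨i, hi⟩ := hs3 (fun i => ⟨(hs1 i).1, (hs1 i).2⟩)
      exact Set.mem_iUnion.2 ⟨i, fun k => (hs1 k).1, le_antisymm (hs2 i) hi⟩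
    · have hsub : {s : Fin n → ℝ | (∀ i, 0 < s i ∧ s i < c) ∧
          ∀ i, ∏ j, (s j) ^ β < c ^ β * s i} ⊆ {s : Fin n → ℝ | (∀ i, s i ∈ Set.Ioo (0:ℝ) c) ∧
          ∀ i, ∏ j, (s j) ^ β ≤ c ^ β * s i} := by
        rintro s ⟨h1, h2⟩
        exact ⟨fun i => ⟨(h1 i).1, (h1 i).2⟩, fun i => (h2 i).le⟩
      rw [Set.diff_eq_empty.2 hsub]
      exact measure_empty
  rw [setIntegral_congr_set hae, ← Tmap_image n hn c hc,
    integral_image_eq_integral_abs_det_fderiv_smul volume hUm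
      (fun t _ => (Tmap_hasFDerivAt c n t).hasFDerivWithinAt) (Tmap_injOn n hn c hc) g,
    ← integral_const_mul]
  apply setIntegral_congr_fun hUm
  intro t ht
  simp only [smul_eq_mul]
  have hti : ∀ i, 0 < t i := fun i => (ht i (Set.mem_univ i)).1
  have hti1 : ∀ i, t i < 1 := fun i => (ht i (Set.mem_univ i)).2
  have htne : ∀ i, t i ≠ 0 := fun i => (hti i).ne'
  have hP : 0 < ∏ j, t j := Finset.prod_pos fun j _ => hti j
  have hv : ∀ i, 0 < ∏ j ∈ Finset.univ.erase i, t j :=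
    fun i => Finset.prod_pos fun j _ => hti j
  have hdet : |(Tderiv c n t).det| = ((n:ℝ)-1) * (c^n * (∏ j, t j)^(n-2)) := by
    rw [Tderiv_det c n hn t htne, abs_mul, abs_mul, abs_mul, abs_pow, abs_neg, abs_one,
      one_pow, one_mul, abs_of_nonpos (by linarith : 1 - (n:ℝ) ≤ 0),
      abs_of_pos (pow_pos hc n), abs_of_pos (pow_pos hP (n-2))]
    ring
  have hsum : (∑ i, (c * ∏ j ∈ Finset.univ.erase i, t j)) / ((N:ℝ)-n)
      = α * ∑ i, ∏ j ∈ Finset.univ.erase i, t j := by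
    rw [← Finset.mul_sum, hcdef]
    field_simp
  have hsume : ∑ i, (l i - γ) = -γ := by
    rw [Finset.sum_sub_distrib, ← hL, Finset.sum_const, Finset.card_univ, Fintype.card_fin,
      nsmul_eq_mul, hγdef]
    field_simp
    ring
  set X := ∏ i, (t i) ^ (γ - l i) with hX
  have h1 : ∏ i, (c * ∏ j ∈ Finset.univ.erase i, t j) ^ (l i - γ)
      = c^(-γ) * ((∏ j, t j)^(-γ) * X) := by
    have e1 : ∀ i, (c * ∏ j ∈ Finset.univ.erase i, t j) ^ (l i - γ)
        = c ^ (l i - γ) * ((∏ j, t j) ^ (l i - γ) * (t i) ^ (γ - l i)) := by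
      intro i
      rw [Real.mul_rpow hc.le (hv i).le, prod_erase_eq' n t htne i,
        Real.mul_rpow hP.le (inv_nonneg.2 (hti i).le), Real.inv_rpow (hti i).le,
        ← Real.rpow_neg (hti i).le, neg_sub]
    rw [Finset.prod_congr rfl fun i _ => e1 i, Finset.prod_mul_distrib,
      Finset.prod_mul_distrib, ← Real.rpow_sum_of_pos hc, ← Real.rpow_sum_of_pos hP, hsume]
  have h2 : ∏ i, (t i) ^ ((n:ℝ) - 2 - l i)
      = (∏ j, t j) ^ ((n:ℝ) - 2 - γ) * X := by
    have e2 : ∀ i, (t i) ^ ((n:ℝ) - 2 - l i)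
        = (t i) ^ ((n:ℝ) - 2 - γ) * (t i) ^ (γ - l i) := by
      intro i
      rw [← Real.rpow_add (hti i)]
      congr 1
      ring
    rw [Finset.prod_congr rfl fun i _ => e2 i, Finset.prod_mul_distrib, hX,
      Real.finset_prod_rpow Finset.univ t (fun i _ => (hti i).le) ((n:ℝ) - 2 - γ)]
  have hc1 : c ^ (-((n:ℝ) - γ)) * c ^ (n:ℕ) * c ^ (-γ) = 1 := by
    rw [← Real.rpow_natCast c n, ← Real.rpow_add hc, ← Real.rpow_add hc,
      show -((n:ℝ) - γ) + (n:ℝ) + -γ = 0 by ring, Real.rpow_zero]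
  have hP1 : (∏ j, t j) ^ ((n : ℕ) - 2) * (∏ j, t j) ^ (-γ)
      = (∏ j, t j) ^ ((n:ℝ) - 2 - γ) := by
    rw [← Real.rpow_natCast (∏ j, t j) (n-2), ← Real.rpow_add hP]
    congr 1
    rw [Nat.cast_sub (by omega : 2 ≤ n)]
    push_cast
    ring
  have hβ1 : β * ((n:ℝ) - 1) = 1 := inv_mul_cancel₀ hne
  have hmain : ∏ i, (t i) ^ ((n:ℝ) - 2 - l i)
      = c ^ (-((n:ℝ) - γ)) * β * (((n:ℝ)-1) * (c^n * (∏ j, t j)^(n-2)))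
        * (c^(-γ) * ((∏ j, t j)^(-γ) * X)) := by
    rw [h2]
    calc (∏ j, t j) ^ ((n:ℝ) - 2 - γ) * X
        = ((c ^ (-((n:ℝ) - γ)) * c ^ (n:ℕ) * c ^ (-γ)) * (β * ((n:ℝ)-1)))
            * (((∏ j, t j) ^ ((n : ℕ) - 2) * (∏ j, t j) ^ (-γ)) * X) := by
          rw [hc1, hβ1, hP1]
          ring
      _ = c ^ (-((n:ℝ) - γ)) * β * (((n:ℝ)-1) * (c^n * (∏ j, t j)^(n-2)))
            * (c^(-γ) * ((∏ j, t j)^(-γ) * X)) := by ring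
  rw [hg]
  show (1 - α * ∑ i, ∏ j ∈ Finset.univ.erase i, t j) ^ (N - n) *
          ∏ i, (t i) ^ ((n : ℝ) - 2 - l i)
      = c ^ (-((n:ℝ) - γ)) * β * (|(Tderiv c n t).det| *
        ((1 - (∑ i, (c * ∏ j ∈ Finset.univ.erase i, t j))/((N:ℝ)-n))^(N-n) *
          ∏ i, (c * ∏ j ∈ Finset.univ.erase i, t j) ^ (l i - γ)))
  rw [hdet, hsum, h1, hmain]
  ring
end

section
/- Let m ≥ 3, k ≥ 0 an integer, 0 < a < b ≤ 1 with a = ((s_1⋯s_{m−1})/(α(N−n)))^{1/(m−2)} and b = s_{m−1}, and let S be a real number with 0 ≤ S ≤ 1/2. Then the integral ∫_a^b (1 − S − s/(N−n))^{N−n} s^{−1}(−ln s)^k ds is bounded above by (1−S)^{N−n}/(k+1) · ((−ln a)^{k+1} − (−ln b)^{k+1}), and bounded below by (1−S)^{N−n}/(k+1) · ((−ln a)^{k+1} − (−ln b)^{k+1} − 2Γ(k+2)), provided b ≤ 1 and 0 < a < b. -/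
open Finset

lemma hasDeriv_nlp (k : ℕ) {x : ℝ} (hx : x ≠ 0) :
    HasDerivAt (fun y => (-Real.log y) ^ (k + 1))
      (-((k + 1 : ℝ) * (-Real.log x) ^ k * x⁻¹)) x := by
  have h := ((Real.hasDerivAt_log hx).neg).pow (k + 1)
  refine h.congr_deriv ?_
  simp only [Pi.neg_apply, Nat.add_sub_cancel]
  push_cast
  ring

lemma integral_inv_mul_nlp (k : ℕ) {a b : ℝ} (ha : 0 < a) (hab : a ≤ b) :
    ∫ x in a..b, x⁻¹ * (-Real.log x) ^ k
      = ((-Real.log a) ^ (k + 1) - (-Real.log b) ^ (k + 1)) / (k + 1) := by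
  have huIcc : Set.uIcc a b = Set.Icc a b := Set.uIcc_of_le hab
  have hne : ∀ x ∈ Set.uIcc a b, x ≠ 0 := by
    intro x hx
    rw [huIcc] at hx
    exact ne_of_gt (lt_of_lt_of_le ha hx.1)
  have hderiv : ∀ x ∈ Set.uIcc a b,
      HasDerivAt (fun y => -(-Real.log y) ^ (k + 1) / (k + 1))
        (x⁻¹ * (-Real.log x) ^ k) x := by
    intro x hx
    have h := ((hasDeriv_nlp k (hne x hx)).neg).div_const ((k : ℝ) + 1)
    refine h.congr_deriv ?_
    have hk : ((k : ℝ) + 1) ≠ 0 := by positivity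
    have hx0 : x ≠ 0 := hne x hx
    field_simp
  have hcont : ContinuousOn (fun x => x⁻¹ * (-Real.log x) ^ k) (Set.uIcc a b) := by
    apply ContinuousOn.mul
    · exact ContinuousOn.mono continuousOn_inv₀ (by intro x hx; exact hne x hx)
    · exact ((Real.continuousOn_log.mono (by intro x hx; exact hne x hx)).neg).pow k
  rw [intervalIntegral.integral_eq_sub_of_hasDerivAt hderiv hcont.intervalIntegrable]
  have : ((k : ℝ) + 1) ≠ 0 := by positivity
  field_simp
  ring

lemma integral_nlp_le (k : ℕ) {a : ℝ} (ha : 0 < a) (ha1 : a ≤ 1) :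
    ∫ x in a..(1:ℝ), (-Real.log x) ^ k ≤ (k.factorial : ℝ) := by
  induction k with
  | zero => simp; linarith
  | succ k ih =>
    have huIcc : Set.uIcc a (1:ℝ) = Set.Icc a 1 := Set.uIcc_of_le ha1
    have hne : ∀ x ∈ Set.uIcc a (1:ℝ), x ≠ 0 := by
      intro x hx; rw [huIcc] at hx; exact ne_of_gt (lt_of_lt_of_le ha hx.1)
    have hcontk : ∀ j : ℕ, ContinuousOn (fun x => (-Real.log x) ^ j) (Set.uIcc a (1:ℝ)) :=
      fun j => ((Real.continuousOn_log.mono (fun x hx => hne x hx)).neg).pow j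
    have hderiv : ∀ x ∈ Set.uIcc a (1:ℝ),
        HasDerivAt (fun y => y * (-Real.log y) ^ (k + 1))
          ((-Real.log x) ^ (k + 1) - (k + 1 : ℝ) * (-Real.log x) ^ k) x := by
      intro x hx
      have h := (hasDerivAt_id x).mul (hasDeriv_nlp k (hne x hx))
      refine h.congr_deriv ?_
      have hx0 : x ≠ 0 := hne x hx
      field_simp
      simp only [id]
      ring
    have hint1 : IntervalIntegrable (fun x => (-Real.log x) ^ (k+1)) MeasureTheory.volume a 1 :=
      (hcontk (k+1)).intervalIntegrable
    have hint2 : IntervalIntegrable (fun x => (k + 1 : ℝ) * (-Real.log x) ^ k) MeasureTheory.volume a 1 :=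
      ((hcontk k).const_smul ((k:ℝ)+1)).intervalIntegrable
    have hftc := intervalIntegral.integral_eq_sub_of_hasDerivAt hderiv (hint1.sub hint2)
    rw [intervalIntegral.integral_sub hint1 hint2] at hftc
    have h2 : ∫ x in a..(1:ℝ), (k + 1 : ℝ) * (-Real.log x) ^ k
        = (k + 1 : ℝ) * ∫ x in a..(1:ℝ), (-Real.log x) ^ k :=
      intervalIntegral.integral_const_mul _ _
    have hHa : 0 ≤ a * (-Real.log a) ^ (k + 1) := by
      have : 0 ≤ -Real.log a := by
        have := Real.log_nonpos ha.le ha1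
        linarith
      positivity
    have heq : ∫ x in a..(1:ℝ), (-Real.log x) ^ (k+1)
        = 1 * (-Real.log 1) ^ (k+1) - a * (-Real.log a) ^ (k+1)
          + (k + 1 : ℝ) * ∫ x in a..(1:ℝ), (-Real.log x) ^ k := by
      rw [← h2]; linarith [hftc]
    rw [heq]
    simp only [Real.log_one, neg_zero]
    have hk1 : (0:ℝ) ≤ (k:ℝ) + 1 := by positivity
    have hmul := mul_le_mul_of_nonneg_left ih hk1
    have hfact : ((k+1).factorial : ℝ) = ((k:ℝ)+1) * (k.factorial : ℝ) := by
      rw [Nat.factorial_succ]; push_cast; ring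
    rw [hfact]
    have h0 : ((0:ℝ)) ^ (k+1) = 0 := zero_pow (Nat.succ_ne_zero k)
    nlinarith [h0]

lemma key_lower (M : ℕ) (hM : 1 ≤ M) {c x : ℝ} (hc : 1/2 ≤ c) (hx : 0 < x) (hx1 : x ≤ 1) :
    c ^ M * (1 - 2*x) ≤ (c - x / M) ^ M := by
  have hM0 : (0:ℝ) < M := by exact_mod_cast hM
  have hM1 : (1:ℝ) ≤ M := by exact_mod_cast hM
  have hc0 : (0:ℝ) ≤ c := by linarith
  by_cases hx2 : x < 1/2
  · have bern : 1 - 2*x ≤ (1 - 2*x/M) ^ M := by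
      have hge : (-2:ℝ) ≤ -(2*x/M) := by
        have : 2*x/M ≤ 2 := by
          rw [div_le_iff₀ hM0]; nlinarith
        linarith
      have h := one_add_mul_le_pow hge M
      calc 1 - 2*x = 1 + (M:ℝ) * (-(2*x/M)) := by field_simp; ring
        _ ≤ (1 + -(2*x/M))^M := h
        _ = (1 - 2*x/M)^M := by ring_nf
    have h1 : (0:ℝ) ≤ 1 - 2*x/M := by
      rw [sub_nonneg, div_le_one hM0]; linarith
    calc c^M * (1-2*x) ≤ c^M * (1-2*x/M)^M :=
          mul_le_mul_of_nonneg_left bern (pow_nonneg hc0 M)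
      _ = (c * (1-2*x/M))^M := (mul_pow _ _ _).symm
      _ ≤ (c - x/M)^M := by
          apply pow_le_pow_left₀ (by positivity)
          have hxM : 0 < x/M := div_pos hx hM0
          have hrw : c * (1 - 2*x/M) = c - (2*c) * (x/M) := by ring
          rw [hrw]
          nlinarith
  · push_neg at hx2
    by_cases hcx : 0 ≤ c - x/M
    · have h1 : c^M*(1-2*x) ≤ 0 :=
        mul_nonpos_of_nonneg_of_nonpos (pow_nonneg hc0 M) (by linarith)
      exact le_trans h1 (pow_nonneg hcx M)
    · push_neg at hcx
      have hMeq : M = 1 := by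
        by_contra h
        have h2 : 2 ≤ M := by omega
        have h2r : (2:ℝ) ≤ M := by exact_mod_cast h2
        have : x / M ≤ 1/2 := by
          rw [div_le_iff₀ hM0]; nlinarith
        linarith
      subst hMeq
      simp only [pow_one, Nat.cast_one, div_one]
      nlinarith

theorem crucial_log_integral_bounds (N n m : ℕ) (hnN : n < N) (hm : 3 ≤ m) (k : ℕ)
    (α : ℝ) (hα : 0 < α) (s : ℕ → ℝ) (S a b : ℝ)
    (ha : a = ((∏ i ∈ Finset.Icc 1 (m - 1), s i) / (α * ((N : ℝ) - n)))
        ^ (((m : ℝ) - 2)⁻¹))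
    (hb : b = s (m - 1))
    (ha0 : 0 < a) (hab : a < b) (hb1 : b ≤ 1) (hS0 : 0 ≤ S) (hS : S ≤ 1 / 2) :
    (1 - S) ^ (N - n) / ((k : ℝ) + 1) *
        ((-Real.log a) ^ (k + 1) - (-Real.log b) ^ (k + 1) - 2 * Real.Gamma ((k : ℝ) + 2))
      ≤ (∫ x in a..b, (1 - S - x / ((N : ℝ) - n)) ^ (N - n) * x⁻¹ * (-Real.log x) ^ k) ∧
    (∫ x in a..b, (1 - S - x / ((N : ℝ) - n)) ^ (N - n) * x⁻¹ * (-Real.log x) ^ k)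
      ≤ (1 - S) ^ (N - n) / ((k : ℝ) + 1) *
          ((-Real.log a) ^ (k + 1) - (-Real.log b) ^ (k + 1)) := by
  clear ha hb hm hα
  set M := N - n with hMdef
  have hMpos : 1 ≤ M := Nat.sub_pos_of_lt hnN
  have hcast : ((N:ℝ) - (n:ℝ)) = (M : ℝ) := by
    rw [hMdef, Nat.cast_sub hnN.le]
  rw [hcast]
  set c : ℝ := 1 - S with hcdef
  have hc : 1/2 ≤ c := by rw [hcdef]; linarith
  have hc1 : c ≤ 1 := by rw [hcdef]; linarith
  have hc0 : (0:ℝ) ≤ c := by linarith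
  have ha1 : a ≤ 1 := le_trans hab.le hb1
  have huIcc : Set.uIcc a b = Set.Icc a b := Set.uIcc_of_le hab.le
  have hmem : ∀ x ∈ Set.uIcc a b, 0 < x ∧ x ≤ 1 := by
    intro x hx
    rw [huIcc] at hx
    exact ⟨lt_of_lt_of_le ha0 hx.1, le_trans hx.2 hb1⟩
  have hne : ∀ x ∈ Set.uIcc a b, x ≠ 0 := fun x hx => ne_of_gt (hmem x hx).1
  -- continuity / integrability
  have hcontlog : ContinuousOn (fun x : ℝ => (-Real.log x) ^ k) (Set.uIcc a b) :=
    ((Real.continuousOn_log.mono (fun x hx => hne x hx)).neg).pow k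
  have hcontinv : ContinuousOn (fun x : ℝ => x⁻¹ * (-Real.log x) ^ k) (Set.uIcc a b) :=
    (ContinuousOn.mono continuousOn_inv₀ (fun x hx => hne x hx)).mul hcontlog
  have hcontf : ContinuousOn
      (fun x : ℝ => (c - x / (M:ℝ)) ^ M * x⁻¹ * (-Real.log x) ^ k) (Set.uIcc a b) := by
    apply ContinuousOn.mul
    apply ContinuousOn.mul
    · exact ((continuous_const.sub (continuous_id.div_const ((M:ℝ)))).pow M).continuousOn
    · exact ContinuousOn.mono continuousOn_inv₀ (fun x hx => hne x hx)
    · exact hcontlog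
  have hif : IntervalIntegrable
      (fun x : ℝ => (c - x / (M:ℝ)) ^ M * x⁻¹ * (-Real.log x) ^ k)
      MeasureTheory.volume a b := hcontf.intervalIntegrable
  have hiup : IntervalIntegrable (fun x : ℝ => c ^ M * (x⁻¹ * (-Real.log x) ^ k))
      MeasureTheory.volume a b := (continuousOn_const.mul hcontinv).intervalIntegrable
  have hii1 : IntervalIntegrable (fun x : ℝ => x⁻¹ * (-Real.log x) ^ k)
      MeasureTheory.volume a b := hcontinv.intervalIntegrable
  have hiJ : IntervalIntegrable (fun x : ℝ => (-Real.log x) ^ k)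
      MeasureTheory.volume a b := hcontlog.intervalIntegrable
  have hilo : IntervalIntegrable
      (fun x : ℝ => c ^ M * (x⁻¹ * (-Real.log x) ^ k) - (2 * c ^ M) * (-Real.log x) ^ k)
      MeasureTheory.volume a b :=
    ((continuousOn_const.mul hcontinv).sub (continuousOn_const.mul hcontlog)).intervalIntegrable
  -- Nonnegativity of x⁻¹ (-log x)^k on the interval
  have hnn : ∀ x ∈ Set.uIcc a b, 0 ≤ x⁻¹ * (-Real.log x) ^ k := by
    intro x hx
    obtain ⟨hx0, hx1⟩ := hmem x hx
    have : 0 ≤ -Real.log x := by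
      have := Real.log_nonpos hx0.le hx1
      linarith
    positivity
  -- integral value I1
  have hI1 := integral_inv_mul_nlp k ha0 hab.le
  -- J bound
  have hJb : ∫ x in a..b, (-Real.log x) ^ k ≤ (k.factorial : ℝ) := by
    have hb0 : 0 < b := lt_trans ha0 hab
    have hcontlog2 : ContinuousOn (fun x : ℝ => (-Real.log x) ^ k) (Set.uIcc b 1) := by
      apply ((Real.continuousOn_log.mono ?_).neg).pow k
      intro x hx
      rw [Set.uIcc_of_le hb1] at hx
      exact ne_of_gt (lt_of_lt_of_le hb0 hx.1)
    have hIb1 : IntervalIntegrable (fun x : ℝ => (-Real.log x) ^ k)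
        MeasureTheory.volume b 1 := hcontlog2.intervalIntegrable
    have hpos : 0 ≤ ∫ x in b..(1:ℝ), (-Real.log x) ^ k := by
      apply intervalIntegral.integral_nonneg hb1
      intro x hx
      have : 0 ≤ -Real.log x := by
        have := Real.log_nonpos (le_trans hb0.le hx.1) hx.2
        linarith
      positivity
    have hadd := intervalIntegral.integral_add_adjacent_intervals hiJ hIb1
    have := integral_nlp_le k ha0 ha1
    linarith
  -- Gamma value
  have hG : Real.Gamma ((k:ℝ) + 2) = ((k+1).factorial : ℝ) := by
    have hcast2 : ((k:ℝ) + 2) = (((k+1 : ℕ)):ℝ) + 1 := by push_cast; ring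
    rw [hcast2, Real.Gamma_nat_eq_factorial]
  have hfact : ((k+1).factorial : ℝ) = ((k:ℝ)+1) * (k.factorial : ℝ) := by
    rw [Nat.factorial_succ]; push_cast; ring
  have hk1 : (0:ℝ) < (k:ℝ) + 1 := by positivity
  constructor
  · -- lower bound
    have hpt : ∀ x ∈ Set.Icc a b,
        c ^ M * (x⁻¹ * (-Real.log x) ^ k) - (2 * c ^ M) * (-Real.log x) ^ k
          ≤ (c - x / (M:ℝ)) ^ M * x⁻¹ * (-Real.log x) ^ k := by
      intro x hx
      rw [← huIcc] at hx
      obtain ⟨hx0, hx1⟩ := hmem x hx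
      have hkey := key_lower M hMpos hc hx0 hx1
      have ht := hnn x hx
      have hmul := mul_le_mul_of_nonneg_right hkey ht
      have hxinv : x * x⁻¹ = 1 := mul_inv_cancel₀ (ne_of_gt hx0)
      calc c ^ M * (x⁻¹ * (-Real.log x) ^ k) - (2 * c ^ M) * (-Real.log x) ^ k
          = c ^ M * (1 - 2*x) * (x⁻¹ * (-Real.log x) ^ k) := by
            field_simp
        _ ≤ (c - x / (M:ℝ)) ^ M * (x⁻¹ * (-Real.log x) ^ k) := hmul
        _ = (c - x / (M:ℝ)) ^ M * x⁻¹ * (-Real.log x) ^ k := by ring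
    have hmono := intervalIntegral.integral_mono_on hab.le hilo hif hpt
    have hsplit : ∫ x in a..b,
        (c ^ M * (x⁻¹ * (-Real.log x) ^ k) - (2 * c ^ M) * (-Real.log x) ^ k)
        = c ^ M * ((((-Real.log a) ^ (k + 1) - (-Real.log b) ^ (k + 1))) / (k+1))
          - (2 * c ^ M) * ∫ x in a..b, (-Real.log x) ^ k := by
      rw [intervalIntegral.integral_sub (hiup :
          IntervalIntegrable (fun x : ℝ => c ^ M * (x⁻¹ * (-Real.log x) ^ k)) MeasureTheory.volume a b)
        (hiJ.const_mul (2 * c ^ M) :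
          IntervalIntegrable (fun x : ℝ => (2 * c ^ M) * (-Real.log x) ^ k) MeasureTheory.volume a b),
        intervalIntegral.integral_const_mul, intervalIntegral.integral_const_mul, hI1]
    rw [hsplit] at hmono
    have hcM : (0:ℝ) ≤ c ^ M := pow_nonneg hc0 M
    have hJ2 : (2 * c ^ M) * (∫ x in a..b, (-Real.log x) ^ k)
        ≤ (2 * c ^ M) * (k.factorial : ℝ) :=
      mul_le_mul_of_nonneg_left hJb (by positivity)
    have hgoal : c ^ M / ((k : ℝ) + 1) *
        ((-Real.log a) ^ (k + 1) - (-Real.log b) ^ (k + 1) - 2 * Real.Gamma ((k : ℝ) + 2))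
        = c ^ M * ((((-Real.log a) ^ (k + 1) - (-Real.log b) ^ (k + 1))) / (k+1))
          - (2 * c ^ M) * (k.factorial : ℝ) := by
      rw [hG, hfact]
      field_simp
    rw [hgoal]
    linarith
  · -- upper bound
    have hpt : ∀ x ∈ Set.Icc a b,
        (c - x / (M:ℝ)) ^ M * x⁻¹ * (-Real.log x) ^ k
          ≤ c ^ M * (x⁻¹ * (-Real.log x) ^ k) := by
      intro x hx
      rw [← huIcc] at hx
      obtain ⟨hx0, hx1⟩ := hmem x hx
      have hM1 : (1:ℝ) ≤ (M:ℝ) := by exact_mod_cast hMpos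
      have habs : |c - x / (M:ℝ)| ≤ c := by
        rw [abs_le]
        constructor
        · have : x / (M:ℝ) ≤ 1 := by
            rw [div_le_one (by linarith)]; linarith
          linarith
        · have : 0 < x / (M:ℝ) := div_pos hx0 (by linarith)
          linarith
      have hpow : (c - x / (M:ℝ)) ^ M ≤ c ^ M := by
        calc (c - x / (M:ℝ)) ^ M ≤ |(c - x / (M:ℝ)) ^ M| := le_abs_self _
          _ = |c - x / (M:ℝ)| ^ M := by rw [abs_pow]
          _ ≤ c ^ M := pow_le_pow_left₀ (abs_nonneg _) habs M
      have ht := hnn x hx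
      calc (c - x / (M:ℝ)) ^ M * x⁻¹ * (-Real.log x) ^ k
          = (c - x / (M:ℝ)) ^ M * (x⁻¹ * (-Real.log x) ^ k) := by ring
        _ ≤ c ^ M * (x⁻¹ * (-Real.log x) ^ k) := mul_le_mul_of_nonneg_right hpow ht
    have hmono := intervalIntegral.integral_mono_on hab.le hif hiup hpt
    have hval : ∫ x in a..b, c ^ M * (x⁻¹ * (-Real.log x) ^ k)
        = c ^ M * ((((-Real.log a) ^ (k + 1) - (-Real.log b) ^ (k + 1))) / (k+1)) := by
      rw [intervalIntegral.integral_const_mul, hI1]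
    rw [hval] at hmono
    have : c ^ M / ((k : ℝ) + 1) *
        ((-Real.log a) ^ (k + 1) - (-Real.log b) ^ (k + 1))
        = c ^ M * ((((-Real.log a) ^ (k + 1) - (-Real.log b) ^ (k + 1))) / (k+1)) := by
      field_simp
    rw [this]
    exact hmono
end

section
/- Let q > −1 be real, k ≥ 0 an integer, 0 < a < b ≤ 1, and 0 ≤ S ≤ 1/2, N > n integers. Then ∫_a^b (1 − S − s/(N−n))^{N−n} s^q (−ln s)^k ds ≤ c_{k,q} (1−S)^{N−n} b^{q+1} (−ln b)^k + c'_{k,q} (1−S)^{N−n} b^{q+1}, where c_{k,q}, c'_{k,q} depend only on k and q; in particular the integral is at most C_{k,q}(1−S)^{N−n} b^{q+1} (1 + (−ln b)^k). -/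
open Real intervalIntegral

private lemma exp_aux (ε : ℝ) (hε : 0 < ε) (k : ℕ) (x : ℝ) (hx : 0 ≤ x) :
    x ^ k * Real.exp (-(ε * x)) ≤ ((k : ℝ) / ε) ^ k := by
  rcases Nat.eq_zero_or_pos k with hk | hk
  · subst hk
    have h : Real.exp (-(ε * x)) ≤ 1 := by
      rw [Real.exp_le_one_iff]
      nlinarith
    simpa using h
  · have hk0 : (0:ℝ) < k := by exact_mod_cast hk
    have h1 : ε * x / k ≤ Real.exp (ε * x / k) := by
      have := Real.add_one_le_exp (ε * x / k); linarith
    have h2 : (ε * x / k) ^ k ≤ (Real.exp (ε * x / k)) ^ k :=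
      pow_le_pow_left₀ (by positivity) h1 k
    have h3 : (Real.exp (ε * x / k)) ^ k = Real.exp (ε * x) := by
      rw [← Real.exp_nat_mul]
      congr 1
      field_simp
    rw [h3] at h2
    have h4 : (ε / k) ^ k * x ^ k ≤ Real.exp (ε * x) := by
      calc (ε / k) ^ k * x ^ k = (ε * x / k) ^ k := by rw [← mul_pow]; ring_nf
        _ ≤ _ := h2
    have hkey : x ^ k ≤ ((k:ℝ) / ε) ^ k * Real.exp (ε * x) := by
      have h5 : ((k:ℝ) / ε) ^ k * ((ε / k) ^ k * x ^ k) = x ^ k := by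
        rw [← mul_assoc, ← mul_pow]
        field_simp
        simp
      calc x ^ k = ((k:ℝ) / ε) ^ k * ((ε / k) ^ k * x ^ k) := h5.symm
        _ ≤ ((k:ℝ) / ε) ^ k * Real.exp (ε * x) :=
            mul_le_mul_of_nonneg_left h4 (by positivity)
    calc x ^ k * Real.exp (-(ε * x))
        ≤ ((k:ℝ) / ε) ^ k * Real.exp (ε * x) * Real.exp (-(ε * x)) :=
          mul_le_mul_of_nonneg_right hkey (Real.exp_nonneg _)
      _ = ((k:ℝ) / ε) ^ k := by rw [mul_assoc, ← Real.exp_add]; simp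

private lemma log_factor_aux (ε : ℝ) (hε : 0 < ε) (k : ℕ) (b s : ℝ)
    (hs : 0 < s) (hsb : s ≤ b) (hb1 : b ≤ 1) :
    s ^ ε * (-Real.log s) ^ k ≤
      b ^ ε * (2 ^ k * (1 + ((k : ℝ) / ε) ^ k)) * (1 + (-Real.log b) ^ k) := by
  have hb0 : 0 < b := lt_of_lt_of_le hs hsb
  set L : ℝ := -Real.log b with hL
  set x : ℝ := Real.log b - Real.log s with hx
  have hL0 : 0 ≤ L := by
    simp only [hL, neg_nonneg]
    exact Real.log_nonpos hb0.le hb1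
  have hx0 : 0 ≤ x := by
    have := Real.log_le_log hs hsb
    simp only [hx]; linarith
  have hLk : 0 ≤ L ^ k := pow_nonneg hL0 k
  have hxk : 0 ≤ x ^ k := pow_nonneg hx0 k
  have hKk : 0 ≤ ((k:ℝ)/ε) ^ k := by positivity
  have hbε : 0 ≤ b ^ ε := Real.rpow_nonneg hb0.le ε
  have hlogs : -Real.log s = L + x := by simp only [hL, hx]; ring
  have hsε : s ^ ε = b ^ ε * Real.exp (-(ε * x)) := by
    rw [Real.rpow_def_of_pos hs, Real.rpow_def_of_pos hb0, ← Real.exp_add]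
    congr 1
    simp only [hx]; ring
  have hpow2 : (L + x) ^ k ≤ 2 ^ k * (L ^ k + x ^ k) := by
    calc (L + x) ^ k ≤ (2 * max L x) ^ k := by
          apply pow_le_pow_left₀ (by positivity)
          rcases le_total L x with h | h
          · rw [max_eq_right h]; linarith
          · rw [max_eq_left h]; linarith
      _ = 2 ^ k * max L x ^ k := by rw [mul_pow]
      _ ≤ 2 ^ k * (L ^ k + x ^ k) := by
          apply mul_le_mul_of_nonneg_left _ (by positivity)
          rcases le_total L x with h | h
          · rw [max_eq_right h]; linarith
          · rw [max_eq_left h]; linarith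
  have hexp1 : Real.exp (-(ε * x)) ≤ 1 := Real.exp_le_one_iff.2 (by nlinarith)
  have hexp0 : 0 ≤ Real.exp (-(ε * x)) := Real.exp_nonneg _
  have hea := exp_aux ε hε k x hx0
  calc s ^ ε * (-Real.log s) ^ k
      = b ^ ε * Real.exp (-(ε * x)) * (L + x) ^ k := by rw [hsε, hlogs]
    _ ≤ b ^ ε * Real.exp (-(ε * x)) * (2 ^ k * (L ^ k + x ^ k)) :=
        mul_le_mul_of_nonneg_left hpow2 (by positivity)
    _ = b ^ ε * (2 ^ k * (L ^ k * Real.exp (-(ε * x)) + x ^ k * Real.exp (-(ε * x)))) := by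
        ring
    _ ≤ b ^ ε * (2 ^ k * (L ^ k + ((k:ℝ)/ε) ^ k)) := by
        apply mul_le_mul_of_nonneg_left _ hbε
        apply mul_le_mul_of_nonneg_left _ (by positivity)
        nlinarith
    _ ≤ b ^ ε * (2 ^ k * ((1 + ((k:ℝ)/ε) ^ k) * (1 + L ^ k))) := by
        apply mul_le_mul_of_nonneg_left _ hbε
        apply mul_le_mul_of_nonneg_left _ (by positivity)
        nlinarith [mul_nonneg hKk hLk]
    _ = b ^ ε * (2 ^ k * (1 + ((k:ℝ)/ε) ^ k)) * (1 + L ^ k) := by ring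

theorem noncritical_integral_bound (q : ℝ) (hq : -1 < q) (k : ℕ) :
    ∃ C : ℝ, 0 < C ∧ ∀ (N n : ℕ), n < N → ∀ (a b S : ℝ),
      0 < a → a < b → b ≤ 1 → 0 ≤ S → S ≤ 1 / 2 →
      ∫ s in a..b, (1 - S - s / ((N : ℝ) - n)) ^ (N - n) * s ^ q * (-Real.log s) ^ k
        ≤ C * (1 - S) ^ (N - n) * b ^ (q + 1) * (1 + (-Real.log b) ^ k) := by
  have hq1 : (0:ℝ) < q + 1 := by linarith
  set ε : ℝ := (q+1)/2 with hεdef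
  have hε : 0 < ε := by simp only [hεdef]; linarith
  set q' : ℝ := (q-1)/2 with hq'def
  have hq' : -1 < q' := by simp only [hq'def]; linarith
  have hq'1 : 0 < q' + 1 := by linarith
  set D : ℝ := 2 ^ k * (1 + ((k:ℝ)/ε) ^ k) with hD
  have hDpos : 0 < D := by positivity
  refine ⟨D * (2/(q+1)), by positivity, ?_⟩
  intro N n hNn a b S ha hab hb1 hS0 hS2
  have hb0 : 0 < b := ha.trans hab
  set m : ℕ := N - n with hm
  have hm1 : 1 ≤ (m:ℝ) := by
    have h : 0 < m := Nat.sub_pos_of_lt hNn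
    exact_mod_cast h
  have hcast : ((N:ℝ) - n) = (m:ℝ) := by
    rw [hm, Nat.cast_sub hNn.le]
  set L : ℝ := -Real.log b with hL
  have hL0 : 0 ≤ L := by
    simp only [hL, neg_nonneg]; exact Real.log_nonpos hb0.le hb1
  have hLk : 0 ≤ 1 + L ^ k := by positivity
  have h1S : (0:ℝ) < 1 - S := by linarith
  have hbε : 0 ≤ b ^ ε := Real.rpow_nonneg hb0.le ε
  set K : ℝ := (1-S)^m * (b ^ ε * D * (1 + L ^ k)) with hK
  have hKnn : 0 ≤ K := by positivity
  have hpt : ∀ s ∈ Set.Icc a b,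
      (1 - S - s / ((N : ℝ) - n)) ^ m * s ^ q * (-Real.log s) ^ k ≤ K * s ^ q' := by
    intro s hs
    obtain ⟨hsa, hsb⟩ := hs
    have hs0 : 0 < s := lt_of_lt_of_le ha hsa
    have hs1 : s ≤ 1 := hsb.trans hb1
    have hlogs : 0 ≤ -Real.log s := by
      rw [neg_nonneg]; exact Real.log_nonpos hs0.le hs1
    have hsm : s / (m:ℝ) ≤ s := div_le_self hs0.le hm1
    have hdm : 0 ≤ s / (m:ℝ) := div_nonneg hs0.le (by linarith)
    have habs : |1 - S - s / ((N:ℝ) - n)| ≤ 1 - S := by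
      rw [hcast, abs_le]
      constructor <;> nlinarith
    have hfac1 : (1 - S - s / ((N:ℝ) - n)) ^ m ≤ (1-S)^m := by
      calc (1 - S - s / ((N:ℝ) - n)) ^ m ≤ |(1 - S - s / ((N:ℝ) - n)) ^ m| := le_abs_self _
        _ = |1 - S - s / ((N:ℝ) - n)| ^ m := by rw [abs_pow]
        _ ≤ (1-S)^m := pow_le_pow_left₀ (abs_nonneg _) habs m
    have hsplit : s ^ q = s ^ q' * s ^ ε := by
      rw [← Real.rpow_add hs0]
      congr 1
      simp only [hq'def, hεdef]; ring
    have hB := log_factor_aux ε hε k b s hs0 hsb hb1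
    calc (1 - S - s / ((N:ℝ) - n)) ^ m * s ^ q * (-Real.log s) ^ k
        ≤ (1-S)^m * s ^ q * (-Real.log s) ^ k := by
          apply mul_le_mul_of_nonneg_right _ (pow_nonneg hlogs k)
          exact mul_le_mul_of_nonneg_right hfac1 (Real.rpow_nonneg hs0.le q)
      _ = (1-S)^m * (s ^ q' * (s ^ ε * (-Real.log s) ^ k)) := by rw [hsplit]; ring
      _ ≤ (1-S)^m * (s ^ q' * (b ^ ε * D * (1 + L ^ k))) := by
          apply mul_le_mul_of_nonneg_left _ (by positivity)
          exact mul_le_mul_of_nonneg_left hB (Real.rpow_nonneg hs0.le q')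
      _ = K * s ^ q' := by rw [hK]; ring
  have hint_f : IntervalIntegrable
      (fun s => (1 - S - s / ((N:ℝ) - n)) ^ m * s ^ q * (-Real.log s) ^ k)
      MeasureTheory.volume a b := by
    apply ContinuousOn.intervalIntegrable
    rw [Set.uIcc_of_le hab.le]
    apply ContinuousOn.mul
    · apply ContinuousOn.mul
      · exact ((continuous_const.sub (continuous_id.div_const ((N:ℝ) - n))).pow m).continuousOn
      · apply ContinuousOn.rpow_const continuousOn_id
        intro x hx
        exact Or.inl (ne_of_gt (lt_of_lt_of_le ha hx.1))
    · apply ContinuousOn.pow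
      apply ContinuousOn.neg
      apply Real.continuousOn_log.mono
      intro x hx
      simp only [Set.mem_compl_iff, Set.mem_singleton_iff]
      exact ne_of_gt (lt_of_lt_of_le ha hx.1)
  have hint_g : IntervalIntegrable (fun s => K * s ^ q') MeasureTheory.volume a b :=
    (intervalIntegral.intervalIntegrable_rpow' hq').const_mul K
  have hmono := intervalIntegral.integral_mono_on hab.le hint_f hint_g hpt
  have hval : ∫ s in a..b, K * s ^ q' = K * ((b ^ (q'+1) - a ^ (q'+1)) / (q'+1)) := by
    rw [intervalIntegral.integral_const_mul, integral_rpow (Or.inl hq')]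
  have ha' : 0 ≤ a ^ (q'+1) := Real.rpow_nonneg ha.le _
  have hbq : b ^ ε * b ^ (q'+1) = b ^ (q+1) := by
    rw [← Real.rpow_add hb0]
    congr 1
    simp only [hεdef, hq'def]; ring
  calc ∫ s in a..b, (1 - S - s / ((N:ℝ) - n)) ^ m * s ^ q * (-Real.log s) ^ k
      ≤ ∫ s in a..b, K * s ^ q' := hmono
    _ = K * ((b ^ (q'+1) - a ^ (q'+1)) / (q'+1)) := hval
    _ ≤ K * (b ^ (q'+1) / (q'+1)) := by
        apply mul_le_mul_of_nonneg_left _ hKnn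
        gcongr
        linarith
    _ = D * (2/(q+1)) * (1-S)^m * b ^ (q+1) * (1 + L ^ k) := by
        rw [hK, ← hbq]
        have : q' + 1 = (q+1)/2 := by simp only [hq'def]; ring
        rw [this]
        field_simp
end
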